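/- Let ξ be a locally finite subset of ℝ^d such that for every x ∈ ℤ^d and every sign vector σ ∈ {-1,+1}^d the open orthant x + Q_σ (where Q_σ = {y ∈ ℝ^d : σ_i y_i > 0 for all i}) contains at least one point of ξ. Then for every x ∈ ξ the Voronoi cell Vor(x|ξ) = {y ∈ ℝ^d : |y - x| ≤ |y - z| for all z ∈ ξ} is a bounded set. -/

import Mathlib

noncomputable section

abbrev E (d : ℕ) : Type := EuclideanSpace ℝ (Fin d)

/-- ξ is locally finite: every bounded region contains finitely many points of ξ. -/
def locFin {d : ℕ} (ξ : Set (E d)) : Prop := ∀ r : ℝ, (ξ ∩ Metric.closedBall 0 r).Finite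

/-- The Voronoi cell of nucleus `x` for the configuration `ξ`. -/
def vor {d : ℕ} (ξ : Set (E d)) (x : E d) : Set (E d) := {y | ∀ z ∈ ξ, dist y x ≤ dist y z}

/-- if every translated open orthant `x + Q_σ` (x ∈ ℤ^d, σ ∈ {-1,1}^d)
contains a point of ξ, then every Voronoi cell of ξ is bounded. -/
theorem stmt0 (d : ℕ) (ξ : Set (E d)) (hlf : locFin ξ)
    (horth : ∀ (x : Fin d → ℤ) (σ : Fin d → ℝ), (∀ i, σ i = 1 ∨ σ i = -1) →
      ∃ p ∈ ξ, ∀ i, σ i * (p i - (x i : ℝ)) > 0) :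
    ∀ x ∈ ξ, Bornology.IsBounded (vor ξ x) := by
  intro x hx
  have key : ∀ b : Fin d → Bool, ∃ p ∈ ξ,
      ∀ i, (if b i then (1:ℝ) else -1) * (p i - x i) > 1 := by
    intro b
    obtain ⟨p, hp, hpa⟩ := horth (fun i => if b i then ⌈x i⌉ + 1 else ⌊x i⌋ - 1)
      (fun i => if b i then 1 else -1) (fun i => by by_cases h : b i <;> simp [h])
    refine ⟨p, hp, fun i => ?_⟩
    have h1 := hpa i
    by_cases h : b i = true
    · rw [if_pos h] at h1 ⊢
      rw [if_pos h] at h1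
      push_cast at h1
      have := Int.le_ceil (x i)
      linarith
    · rw [if_neg h] at h1 ⊢
      rw [if_neg h] at h1
      push_cast at h1
      have := Int.floor_le (x i)
      linarith
  choose P hPξ hP using key
  set C : ℝ := Finset.univ.sup' (Finset.univ_nonempty (α := Fin d → Bool))
    (fun b => dist (P b) x ^ 2 / 2) with hC
  apply Bornology.IsBounded.subset (Metric.isBounded_closedBall (x := x) (r := C))
  intro y hy
  set b : Fin d → Bool := fun i => decide (x i ≤ y i) with hb
  have hyp : dist y x ≤ dist y (P b) := hy (P b) (hPξ b)
  have hinner : (inner ℝ (y - x) (P b - x) : ℝ) = ∑ i, (y i - x i) * (P b i - x i) := by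
    rw [PiLp.inner_apply]
    refine Finset.sum_congr rfl fun i _ => ?_
    simp [RCLike.inner_apply, mul_comm]
  have hterm : ∀ i, |y i - x i| ≤ (y i - x i) * (P b i - x i) := by
    intro i
    have h1 := hP b i
    by_cases h : x i ≤ y i
    · have hb' : b i = true := by simp [hb, h]
      rw [hb', if_pos rfl, one_mul] at h1
      rw [abs_of_nonneg (by linarith : (0:ℝ) ≤ y i - x i)]
      nlinarith
    · have hb' : b i = false := by simp [hb, h]
      rw [hb', if_neg (by simp)] at h1
      push_neg at h
      rw [abs_of_nonpos (by linarith : y i - x i ≤ 0)]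
      nlinarith
  have hl1 : ‖y - x‖ ≤ ∑ i, |y i - x i| := by
    have hnn : ∀ i ∈ Finset.univ, (0:ℝ) ≤ |y i - x i| := fun i _ => abs_nonneg _
    have h2 : ‖y - x‖ ^ 2 ≤ (∑ i, |y i - x i|) ^ 2 := by
      rw [EuclideanSpace.norm_eq, Real.sq_sqrt (by positivity)]
      calc ∑ i, ‖(y - x) i‖ ^ 2 = ∑ i, |y i - x i| ^ 2 := by
            refine Finset.sum_congr rfl fun i _ => ?_
            simp [Real.norm_eq_abs]
        _ ≤ (∑ i, |y i - x i|) ^ 2 := Finset.sum_sq_le_sq_sum_of_nonneg hnn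
    have hs := Finset.sum_nonneg hnn
    nlinarith [norm_nonneg (y - x)]
  have hsum : ∑ i, |y i - x i| ≤ (inner ℝ (y - x) (P b - x) : ℝ) := by
    rw [hinner]
    exact Finset.sum_le_sum (fun i _ => hterm i)
  have hexp : ‖y - P b‖ ^ 2 = ‖y - x‖ ^ 2 - 2 * (inner ℝ (y - x) (P b - x) : ℝ)
      + ‖P b - x‖ ^ 2 := by
    have hrw : y - P b = (y - x) - (P b - x) := by abel
    rw [hrw, norm_sub_sq_real]
  have hyp2 : ‖y - x‖ ^ 2 ≤ ‖y - P b‖ ^ 2 := by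
    rw [dist_eq_norm, dist_eq_norm] at hyp
    exact pow_le_pow_left₀ (norm_nonneg _) hyp 2
  have hfin : dist y x ≤ dist (P b) x ^ 2 / 2 := by
    rw [dist_eq_norm, dist_eq_norm]
    nlinarith [hl1, hsum, hexp, hyp2, norm_sub_rev (P b) x]
  have hCle : dist (P b) x ^ 2 / 2 ≤ C := by
    rw [hC]
    exact Finset.le_sup' (fun b => dist (P b) x ^ 2 / 2) (Finset.mem_univ b)
  exact Metric.mem_closedBall.mpr (hfin.trans hCle)
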